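/- Assume CH (or merely 𝔟 = ω₁ together with the existence of a <*-increasing unbounded ω₁-sequence of increasing functions). Then 2^ω does not have the Grinzing property: there is an uncountable Y ⊆ 2^ω such that there do not exist ω₁-many uncountable subsets of Y with pairwise disjoint closures in 2^ω. -/

import Mathlib

open Cardinal Set Filter

namespace NotGrinzingAux

noncomputable section

universe u

attribute [local instance] Classical.propDecidable

/-- Position of the `k`-th one in the encoding of `f`. -/
def P (f : ℕ → ℕ) (k : ℕ) : ℕ := k + ∑ i ∈ Finset.range (k + 1), f i

lemma P_strictMono (f : ℕ → ℕ) : StrictMono (P f) := by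
  apply strictMono_nat_of_lt_succ
  intro n
  have : ∑ i ∈ Finset.range (n + 1 + 1), f i
      = ∑ i ∈ Finset.range (n + 1), f i + f (n + 1) := Finset.sum_range_succ f (n + 1)
  simp only [P, this]
  omega

lemma le_P (f : ℕ → ℕ) (k : ℕ) : f k ≤ P f k := by
  have : f k ≤ ∑ i ∈ Finset.range (k + 1), f i :=
    Finset.single_le_sum (fun i _ => Nat.zero_le (f i)) (by simp [Nat.lt_succ_self])
  simp only [P]; omega

lemma P_injective : Function.Injective P := by
  intro f g h
  have hs : ∀ k, ∑ i ∈ Finset.range (k + 1), f i = ∑ i ∈ Finset.range (k + 1), g i := by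
    intro k
    have := congrFun h k
    simp only [P] at this
    omega
  funext k
  cases k with
  | zero => simpa using hs 0
  | succ n =>
    have h1 := hs n
    have h2 := hs (n + 1)
    rw [Finset.sum_range_succ f (n + 1), Finset.sum_range_succ g (n + 1)] at h2
    omega

/-- Encoding of `f : ℕ → ℕ` as an element of Cantor space. -/
def enc (f : ℕ → ℕ) : ℕ → Bool := fun n => decide (∃ k, P f k = n)

lemma enc_injective : Function.Injective enc := by
  intro f g h
  apply P_injective
  apply ((P_strictMono f).range_inj (P_strictMono g)).mp
  ext n
  have := congrFun h n
  simp only [enc, decide_eq_decide] at this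
  simpa [Set.mem_range] using this

lemma enc_eq_true_iff (f : ℕ → ℕ) (n : ℕ) : enc f n = true ↔ ∃ k, P f k = n := by
  simp [enc]

/-- A countable enumeration (when it exists) of the ordinals below `α`. -/
def cseq (α : Ordinal.{u}) : ℕ → Ordinal.{u} :=
  if h : (Set.Iio α).Countable then
    (Set.countable_iff_exists_subset_range.mp h).choose
  else fun _ => 0

lemma cseq_covers {α : Ordinal.{u}} (h : (Set.Iio α).Countable) {β : Ordinal.{u}}
    (hβ : β < α) : ∃ i, cseq α i = β := by
  rw [cseq, dif_pos h]
  have := (Set.countable_iff_exists_subset_range.mp h).choose_spec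
  obtain ⟨i, hi⟩ := this hβ
  exact ⟨i, hi⟩

/-- The scale, built by transfinite recursion: `FF G α` dominates `G α` everywhere
and eventually strictly dominates all `FF G β` for `β < α`. -/
def Fstep (G : Ordinal.{u} → ℕ → ℕ) (α : Ordinal.{u})
    (IH : ∀ β, β < α → ℕ → ℕ) : ℕ → ℕ := fun n =>
  G α n + 1 + (Finset.range (n + 1)).sup fun i =>
    if h : cseq α i < α then IH (cseq α i) h n else 0

def FF (G : Ordinal.{u} → ℕ → ℕ) : Ordinal.{u} → ℕ → ℕ :=
  Ordinal.lt_wf.fix (C := fun _ => ℕ → ℕ) (Fstep G)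

lemma FF_eq (G : Ordinal.{u} → ℕ → ℕ) (α : Ordinal.{u}) (n : ℕ) :
    FF G α n = G α n + 1 + ((Finset.range (n + 1)).sup fun i =>
      if _ : cseq α i < α then FF G (cseq α i) n else 0) := by
  have h := Ordinal.lt_wf.fix_eq (C := fun _ => ℕ → ℕ) (Fstep G) α
  have h2 := congrFun h n
  simpa [Fstep, FF] using h2

lemma FF_gt (G : Ordinal.{u} → ℕ → ℕ) (α : Ordinal.{u}) (n : ℕ) :
    G α n < FF G α n := by
  rw [FF_eq G α n]
  omega

lemma FF_mono (G : Ordinal.{u} → ℕ → ℕ) {β α : Ordinal.{u}}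
    (hc : (Set.Iio α).Countable) (hβ : β < α) :
    ∃ i, ∀ n, i ≤ n → FF G β n < FF G α n := by
  obtain ⟨i, hi⟩ := cseq_covers hc hβ
  refine ⟨i, fun n hn => ?_⟩
  have hmem : i ∈ Finset.range (n + 1) := Finset.mem_range.mpr (by omega)
  have hle : (if _ : cseq α i < α then FF G (cseq α i) n else 0)
      ≤ (Finset.range (n + 1)).sup fun j =>
        if _ : cseq α j < α then FF G (cseq α j) n else 0 :=
    Finset.le_sup (f := fun j => if _ : cseq α j < α then FF G (cseq α j) n else 0) hmem
  rw [dif_pos (hi ▸ hβ), hi] at hle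
  rw [FF_eq G α n]
  omega

/-- The countable set: indicators of finite subsets of ℕ. -/
def D : Set (ℕ → Bool) := Set.range fun F : Finset ℕ => fun n => decide (n ∈ F)

lemma D_countable : D.Countable := Set.countable_range _

/-- `Iio γ` is countable for `γ < ω₁`. -/
lemma Iio_countable {γ : Ordinal.{u}} (h : γ < (aleph 1).ord) : (Set.Iio γ).Countable := by
  rw [Cardinal.countable_iff_lt_aleph_one, Ordinal.mk_Iio_ordinal]
  have h1 : γ.card < aleph 1 := (Cardinal.lt_ord).mp h
  have h2 : Cardinal.lift.{u+1} γ.card < Cardinal.lift.{u+1} (aleph 1) := Cardinal.lift_lt.mpr h1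
  rwa [Cardinal.lift_aleph, Ordinal.lift_one] at h2

lemma Iio_omega1_not_countable : ¬ (Set.Iio (aleph 1).ord).Countable := by
  intro h
  rw [Cardinal.countable_iff_lt_aleph_one, Ordinal.mk_Iio_ordinal, Cardinal.card_ord] at h
  rw [Cardinal.lift_aleph, Ordinal.lift_one] at h
  exact lt_irrefl _ h

lemma unbounded_of_uncountable {S : Set Ordinal.{u}} (hS : S ⊆ Set.Iio (aleph 1).ord)
    (hunc : ¬ S.Countable) : ∀ γ < (aleph 1).ord, ∃ β ∈ S, γ ≤ β := by
  intro γ hγ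
  by_contra hcon
  push_neg at hcon
  have : S ⊆ Set.Iio γ := fun β hβ => hcon β hβ
  exact hunc ((Iio_countable hγ).mono this)

universe v in
/-- CH transfers across universes. -/
lemma CH_any (h : Cardinal.continuum.{v} = Cardinal.aleph 1) :
    Cardinal.continuum.{u} = Cardinal.aleph 1 := by
  apply Cardinal.lift_inj.{u, v}.mp
  rw [Cardinal.lift_continuum, Cardinal.lift_aleph, Ordinal.lift_one]
  have h2 := congrArg Cardinal.lift.{u} h
  rwa [Cardinal.lift_continuum, Cardinal.lift_aleph, Ordinal.lift_one] at h2

/-- The scale is "everywhere unbounded" over any uncountable index set. -/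
lemma scale_unbounded (G : Ordinal.{u} → ℕ → ℕ)
    (hG : ∀ g : ℕ → ℕ, ∃ α < (aleph 1).ord, G α = g)
    {S : Set Ordinal.{u}} (hSsub : S ⊆ Set.Iio (aleph 1).ord) (hSunc : ¬ S.Countable)
    (g : ℕ → ℕ) : ∃ β ∈ S, ∃ n, g n < FF G β n := by
  obtain ⟨α, hα, hGα⟩ := hG g
  obtain ⟨β, hβS, hαβ⟩ := unbounded_of_uncountable hSsub hSunc α hα
  rcases eq_or_lt_of_le hαβ with h | h
  · refine ⟨β, hβS, 0, ?_⟩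
    rw [h] at hGα
    have := FF_gt G β 0
    rw [hGα] at this
    exact this
  · obtain ⟨i, hi⟩ := FF_mono G (Iio_countable (hSsub hβS)) h
    refine ⟨β, hβS, i, ?_⟩
    have h1 := FF_gt G α i
    have h2 := hi i le_rfl
    rw [hGα] at h1
    omega

/-- Main lemma: the closure of any uncountable subset of the encoded scale meets `D`. -/
lemma closure_meets_D (G : Ordinal.{u} → ℕ → ℕ)
    (hG : ∀ g : ℕ → ℕ, ∃ α < (aleph 1).ord, G α = g)
    (Z : Set (ℕ → Bool))
    (hZY : Z ⊆ (fun β => enc (FF G β)) '' (Set.Iio (aleph 1).ord))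
    (hZ : ¬ Z.Countable) : (closure Z ∩ D).Nonempty := by
  classical
  set S : Set Ordinal.{u} := {β | β < (aleph 1).ord ∧ enc (FF G β) ∈ Z} with hS
  have hSsub : S ⊆ Set.Iio (aleph 1).ord := fun β hβ => hβ.1
  have hZS : Z ⊆ (fun β => enc (FF G β)) '' S := by
    intro z hz
    obtain ⟨β, hβ, hβz⟩ := hZY hz
    have hβz' : enc (FF G β) = z := hβz
    exact ⟨β, ⟨hβ, hβz'.symm ▸ hz⟩, hβz⟩
  have hSunc : ¬ S.Countable := by
    intro h
    exact hZ (((h.image _).mono hZS))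
  -- all coordinates of P bounded over S would contradict unboundedness
  have hb : ∃ k : ℕ, ∀ B : ℕ, ∃ β ∈ S, B < P (FF G β) k := by
    by_contra hcon
    push_neg at hcon
    choose Bf hBf using hcon
    obtain ⟨β, hβ, n, hn⟩ := scale_unbounded G hG hSsub hSunc Bf
    have h1 := hBf n β hβ
    have h2 := le_P (FF G β) n
    omega
  -- minimal such k
  set k := Nat.find hb with hkdef
  have hk : ∀ B : ℕ, ∃ β ∈ S, B < P (FF G β) k := Nat.find_spec hb
  have hmin : ∀ j, j < k → ∃ B : ℕ, ∀ β ∈ S, P (FF G β) j ≤ B := by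
    intro j hj
    have := Nat.find_min hb hj
    push_neg at this
    exact this
  -- a uniform bound B for coordinates below k
  have hBj' : ∀ j : ℕ, ∃ B, ∀ β ∈ S, j < k → P (FF G β) j ≤ B := by
    intro j
    by_cases hj : j < k
    · obtain ⟨B, hB⟩ := hmin j hj
      exact ⟨B, fun β hβ _ => hB β hβ⟩
    · exact ⟨0, fun β hβ h' => absurd h' hj⟩
  choose Bf hBf using hBj'
  set B := (Finset.range k).sup Bf with hBdef
  have hBB : ∀ j, j < k → ∀ β ∈ S, P (FF G β) j ≤ B := by
    intro j hj β hβ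
    exact le_trans (hBf j β hβ hj) (Finset.le_sup (Finset.mem_range.mpr hj))
  -- witnesses with arbitrarily large k-th coordinate
  choose bfn hbS hbP using hk
  -- pigeonhole on the first k coordinates
  set Φ : ℕ → (Fin k → Fin (B + 1)) := fun m j =>
    ⟨P (FF G (bfn m)) j.val, Nat.lt_succ_of_le (hBB j.val j.isLt (bfn m) (hbS m))⟩ with hΦ
  obtain ⟨t', ht'⟩ := Finite.exists_infinite_fiber Φ
  set M := Φ ⁻¹' {t'} with hMdef
  have hM : M.Infinite := Set.infinite_coe_iff.mp ht'
  have hM' : ∀ N : ℕ, ∃ m, m ∈ M ∧ N ≤ m := by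
    intro N
    by_contra hcon
    push_neg at hcon
    exact hM ((Set.finite_Iio N).subset fun m hm => hcon m hm)
  choose mN hmM hmN using hM'
  set t : ℕ → ℕ := fun j => if hj : j < k then (t' ⟨j, hj⟩ : ℕ) else 0 with ht
  set d : ℕ → Bool := fun n => decide (n ∈ (Finset.range k).image t) with hd
  have hdD : d ∈ D := ⟨(Finset.range k).image t, rfl⟩
  -- the key coordinate computation
  have hPt : ∀ m ∈ M, ∀ j, (hj : j < k) → P (FF G (bfn m)) j = t j := by
    intro m hm j hj
    have h1 : Φ m = t' := hm
    have h2 := congrFun h1 ⟨j, hj⟩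
    have h3 : P (FF G (bfn m)) j = (t' ⟨j, hj⟩ : ℕ) := congrArg Fin.val h2
    rw [h3, ht]
    simp [hj]
  have hcoord : ∀ m ∈ M, ∀ n, n ≤ m → enc (FF G (bfn m)) n = d n := by
    intro m hm n hnm
    rw [hd]
    simp only [enc, decide_eq_decide, Finset.mem_image, Finset.mem_range]
    constructor
    · rintro ⟨q, hq⟩
      by_cases hqk : q < k
      · exact ⟨q, hqk, by rw [← hPt m hm q hqk]; exact hq⟩
      · exfalso
        have h1 : P (FF G (bfn m)) k ≤ P (FF G (bfn m)) q :=
          (P_strictMono _).monotone (le_of_not_gt hqk)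
        have h2 := hbP m
        omega
    · rintro ⟨q, hqk, hq⟩
      exact ⟨q, by rw [hPt m hm q hqk]; exact hq⟩
  -- the sequence converging to d
  set y : ℕ → (ℕ → Bool) := fun N => enc (FF G (bfn (mN N))) with hy
  have hyZ : ∀ N, y N ∈ Z := fun N => (hbS (mN N)).2
  have htend : Tendsto y atTop (nhds d) := by
    rw [tendsto_pi_nhds]
    intro n
    apply tendsto_nhds_of_eventually_eq
    filter_upwards [eventually_ge_atTop n] with N hN
    exact hcoord (mN N) (hmM N) n (le_trans hN (hmN N))
  exact ⟨d, mem_closure_of_tendsto htend (Eventually.of_forall hyZ), hdD⟩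

end

end NotGrinzingAux

theorem ch_implies_cantor_not_grinzing
    (hCH : Cardinal.continuum = Cardinal.aleph 1) :
    ∃ Y : Set (ℕ → Bool), ¬ Y.Countable ∧
      ¬ ∃ Yf : Set.Iio (Cardinal.aleph 1).ord → Set (ℕ → Bool),
        (∀ α, Yf α ⊆ Y ∧ ¬ (Yf α).Countable) ∧
        (∀ α β, α ≠ β → closure (Yf α) ∩ closure (Yf β) = ∅) := by
  classical
  open NotGrinzingAux in
  -- build a surjection G from ordinals below ω₁ onto ℕ → ℕ
  have hmk : #(ℕ → ℕ) = Cardinal.continuum.{0} := by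
    rw [Cardinal.mk_arrow]
    simp only [Cardinal.mk_nat, Cardinal.lift_aleph0]
    rw [Cardinal.aleph0_power_aleph0]
  have hCH0 : Cardinal.continuum.{0} = Cardinal.aleph 1 := NotGrinzingAux.CH_any hCH
  have hlift : Cardinal.lift.{0} #(↥(Set.Iio (Cardinal.aleph 1).ord))
      = Cardinal.lift #(ℕ → ℕ) := by
    rw [Cardinal.lift_uzero, Ordinal.mk_Iio_ordinal, Cardinal.card_ord,
      hmk, hCH0, Cardinal.lift_aleph]
  obtain ⟨E⟩ := Cardinal.lift_mk_eq'.mp hlift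
  set G : Ordinal → ℕ → ℕ := fun α =>
    if h : α < (Cardinal.aleph 1).ord then E ⟨α, h⟩ else fun _ => 0 with hGdef
  have hG : ∀ g : ℕ → ℕ, ∃ α < (Cardinal.aleph 1).ord, G α = g := by
    intro g
    refine ⟨(E.symm g).val, (E.symm g).2, ?_⟩
    simp only [hGdef]
    have hlt : ((E.symm g : ↥(Set.Iio (Cardinal.aleph 1).ord)) : Ordinal) < (Cardinal.aleph 1).ord :=
      (E.symm g).2
    rw [dif_pos hlt]
    exact E.apply_symm_apply g
  -- the uncountable set Y
  refine ⟨(fun β => enc (FF G β)) '' (Set.Iio (Cardinal.aleph 1).ord), ?_, ?_⟩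
  · -- Y is uncountable
    intro hY
    have hinj : Set.InjOn (fun β => enc (FF G β)) (Set.Iio (Cardinal.aleph 1).ord) := by
      intro β hβ γ hγ heq
      by_contra hne
      have hFF : FF G β = FF G γ := enc_injective heq
      rcases lt_or_gt_of_ne hne with h | h
      · obtain ⟨i, hi⟩ := FF_mono G (Iio_countable hγ) h
        have := hi i le_rfl
        rw [hFF] at this
        exact lt_irrefl _ this
      · obtain ⟨i, hi⟩ := FF_mono G (Iio_countable hβ) h
        have := hi i le_rfl
        rw [hFF] at this
        exact lt_irrefl _ this
    exact Iio_omega1_not_countable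
      (countable_of_injective_of_countable_image hinj hY)
  · -- no ω₁-family with pairwise disjoint closures
    rintro ⟨Yf, h1, h2⟩
    have hmeet : ∀ α : Set.Iio (Cardinal.aleph 1).ord, (closure (Yf α) ∩ D).Nonempty :=
      fun α => closure_meets_D G hG (Yf α) (h1 α).1 (h1 α).2
    choose dd hdd using hmeet
    have hddinj : Function.Injective dd := by
      intro α β hab
      by_contra hne
      have h0 := h2 α β hne
      have : dd α ∈ closure (Yf α) ∩ closure (Yf β) :=
        ⟨(hdd α).1, hab ▸ (hdd β).1⟩
      rw [h0] at this
      exact this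
    have hDcount : Countable ↥D := (Set.countable_coe_iff).mpr D_countable
    have : Countable ↥(Set.Iio (Cardinal.aleph 1).ord) := by
      have hinj2 : Function.Injective (fun α : ↥(Set.Iio (Cardinal.aleph 1).ord) =>
          (⟨dd α, (hdd α).2⟩ : ↥D)) := by
        intro a b hab
        exact hddinj (congrArg Subtype.val hab)
      exact hinj2.countable
    exact Iio_omega1_not_countable (Set.countable_coe_iff.mp this)
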